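/- Let A be an (N,v,t)-suitable array, let α be the leftmost (first) symbol of some row of A, and let r′ be a different row of A. Then the array B obtained from A by deleting the occurrence of α in row r′ and appending α at the rightmost (last) position of row r′ is again an (N,v,t)-suitable array. -/

import Mathlib

/-- An `(N,v,t)`-suitable array: an `N × v` array, each of whose rows is a
permutation of `{1,…,v}` (modelled as `Fin v`, with `A i p` the symbol in
position `p` of row `i`), such that every symbol precedes every subset of
`t-1` others in at least one row. -/
def IsSuitableArray (N v t : ℕ) (A : Fin N → Equiv.Perm (Fin v)) : Prop :=
  ∀ σ : Fin v, ∀ S : Finset (Fin v), σ ∉ S → S.card = t - 1 →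
    ∃ i : Fin N, ∀ τ ∈ S, ((A i).symm σ : ℕ) < ((A i).symm τ : ℕ)

/-- Moving an occurrence of `α` (the leftmost symbol of row `r`) from a
different row `r'` to the rightmost position of row `r'` preserves
suitability. -/
theorem suitable_array_of_move_symbol_to_end
    (N v t : ℕ) (hN : 0 < N) (hv : 0 < v) (ht : 0 < t) (htvN : t ≤ min v N)
    (A : Fin N → Equiv.Perm (Fin v)) (hA : IsSuitableArray N v t A)
    (r r' : Fin N) (hrr' : r' ≠ r) (α : Fin v)
    (hα : A r ⟨0, hv⟩ = α)
    (B : Fin N → Equiv.Perm (Fin v))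
    (hB₁ : ∀ i : Fin N, i ≠ r' → B i = A i)
    (hB₂ : ∀ q : Fin v, (q : ℕ) < ((A r').symm α : ℕ) → B r' q = A r' q)
    (hB₃ : ∀ q : Fin v, ∀ h : (q : ℕ) + 1 < v,
      ((A r').symm α : ℕ) ≤ (q : ℕ) → B r' q = A r' ⟨(q : ℕ) + 1, h⟩)
    (hB₄ : B r' ⟨v - 1, by omega⟩ = α) :
    IsSuitableArray N v t B := by
  set a : ℕ := ((A r').symm α : ℕ) with ha
  have hav : a < v := ((A r').symm α).isLt
  -- position of α in row r' of B
  have hposBα : ((B r').symm α : ℕ) = v - 1 := by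
    have : (B r').symm α = ⟨v - 1, by omega⟩ := by
      rw [← hB₄]; simp
    rw [this]
  -- position formula for other symbols in row r' of B
  have hposB : ∀ x : Fin v, x ≠ α →
      ((B r').symm x : ℕ) =
        if ((A r').symm x : ℕ) < a then ((A r').symm x : ℕ)
        else ((A r').symm x : ℕ) - 1 := by
    intro x hx
    set p : ℕ := ((A r').symm x : ℕ) with hp
    have hpv : p < v := ((A r').symm x).isLt
    have hpa : p ≠ a := by
      intro h
      apply hx
      have : (A r').symm x = (A r').symm α := Fin.ext h
      exact (A r').symm.injective this
    by_cases hlt : p < a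
    · have hBx : B r' ⟨p, hpv⟩ = x := by
        rw [hB₂ ⟨p, hpv⟩ (by simpa using hlt)]
        have : (⟨p, hpv⟩ : Fin v) = (A r').symm x := Fin.ext rfl
        rw [this]; simp
      have : (B r').symm x = ⟨p, hpv⟩ := by rw [← hBx]; simp
      rw [this]; simp [hlt]
    · have hgt : a < p := by omega
      have h1 : p - 1 + 1 < v := by omega
      have hBx : B r' ⟨p - 1, by omega⟩ = x := by
        rw [hB₃ ⟨p - 1, by omega⟩ (by simpa using h1) (by simp; omega)]
        have : (⟨(p - 1 : ℕ) + 1, by simpa using h1⟩ : Fin v) = (A r').symm x :=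
          Fin.ext (by simp; omega)
        rw [this]; simp
      have : (B r').symm x = ⟨p - 1, by omega⟩ := by rw [Equiv.symm_apply_eq]; exact hBx.symm
      rw [this]; simp [hlt]
  intro σ S hσS hcard
  by_cases hσα : σ = α
  · subst hσα
    refine ⟨r, fun τ hτ => ?_⟩
    have hBr : B r = A r := hB₁ r (fun h => hrr' h.symm)
    rw [hBr]
    have h0 : (A r).symm σ = ⟨0, hv⟩ := by rw [← hα]; simp
    rw [h0]
    have hτσ : τ ≠ σ := fun h => hσS (h ▸ hτ)
    have hne : (A r).symm τ ≠ ⟨0, hv⟩ := by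
      intro h
      apply hτσ
      have := congrArg (A r) h
      simpa [hα] using this
    have : ((A r).symm τ : ℕ) ≠ 0 := fun h => hne (Fin.ext h)
    simpa using Nat.pos_of_ne_zero this
  · obtain ⟨i, hi⟩ := hA σ S hσS hcard
    by_cases hir : i = r'
    · subst hir
      refine ⟨i, fun τ hτ => ?_⟩
      have hστ : σ ≠ τ := fun h => hσS (h ▸ hτ)
      have hσ' := hposB σ hσα
      have hv2 : 2 ≤ v := by
        have : ((A i).symm σ : ℕ) ≠ a := by
          intro h
          exact hσα ((A i).symm.injective (Fin.ext h))
        have := ((A i).symm σ).isLt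
        omega
      by_cases hτα : τ = α
      · subst hτα
        rw [hposBα, hσ']
        have hσv := ((A i).symm σ).isLt
        have : ((A i).symm σ : ℕ) ≠ a := by
          intro h
          exact hσα ((A i).symm.injective (Fin.ext h))
        split <;> omega
      · have hτ' := hposB τ hτα
        have horder := hi τ hτ
        have hσa : ((A i).symm σ : ℕ) ≠ a := by
          intro h; exact hσα ((A i).symm.injective (Fin.ext h))
        have hτa : ((A i).symm τ : ℕ) ≠ a := by
          intro h; exact hτα ((A i).symm.injective (Fin.ext h))
        rw [hσ', hτ']
        split <;> split <;> omega
    · refine ⟨i, fun τ hτ => ?_⟩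
      rw [hB₁ i hir]
      exact hi τ hτ
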